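/- Let n be a natural number, let C be a graph every finite subset of which is n-open, let A ⊆ C be such that A ≤ₙ C, and let c ∈ C ∖ A be a vertex having exactly n neighbours in A. Then A ∪ {c} ≤ₙ C. -/

import Mathlib

/-- `v` has at most `n` neighbours (in the graph `G`) lying in the set `X`. -/
def valencyLE {V : Type*} (G : SimpleGraph V) (v : V) (X : Set V) (n : ℕ) : Prop :=
  {x ∈ X | G.Adj v x}.encard ≤ n

/-- `B` is `n`-open over `A`. -/
def nOpenOver {V : Type*} (G : SimpleGraph V) (n : ℕ) (A B : Set V) : Prop :=
  ∀ C : Set V, C ⊆ B \ A → C.Finite → C.Nonempty →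
    ∃ c ∈ C, valencyLE G c (A ∪ C) n

/-- `B` is `n`-open. -/
def nOpen {V : Type*} (G : SimpleGraph V) (n : ℕ) (B : Set V) : Prop :=
  ∀ C : Set V, C ⊆ B → C.Finite → C.Nonempty →
    ∃ c ∈ C, valencyLE G c C n

/-- The graph `G` (playing the role of `C`) has every finite subset `n`-open,
`A ≤ₙ C`, and `c ∈ C ∖ A` has exactly `n` neighbours in `A`; then `A ∪ {c} ≤ₙ C`. -/
theorem stmt2 {V : Type*} (G : SimpleGraph V) (n : ℕ)
    (hopen : nOpen G n Set.univ)
    (A : Set V) (hA : nOpenOver G n A Set.univ)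
    (c : V) (hc : c ∉ A)
    (hval : {x ∈ A | G.Adj c x}.encard = n) :
    nOpenOver G n (A ∪ {c}) Set.univ := by
  intro D hD hfin hne
  have hDA : ∀ x ∈ D, x ∉ A := fun x hx h => (hD hx).2 (Or.inl h)
  have hcD : c ∉ D := fun h => (hD h).2 (Or.inr rfl)
  have hDsub : D ⊆ Set.univ \ A := fun x hx => ⟨trivial, hDA x hx⟩
  obtain ⟨d, hd, hdval⟩ := hA (D ∪ {c})
    (by rintro x (hx | rfl); exact hDsub hx; exact ⟨trivial, hc⟩)
    (hfin.union (Set.finite_singleton c)) ⟨c, Or.inr rfl⟩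
  rcases hd with hd | hd
  · refine ⟨d, hd, ?_⟩
    unfold valencyLE at hdval ⊢
    have heq : {x ∈ (A ∪ {c}) ∪ D | G.Adj d x} = {x ∈ A ∪ (D ∪ {c}) | G.Adj d x} := by
      ext x; simp only [Set.mem_setOf_eq, Set.mem_union, Set.mem_singleton_iff]; tauto
    rwa [heq]
  · -- d = c : c has no neighbours in D
    have hdc : d = c := hd
    subst hdc
    unfold valencyLE at hdval
    have hsplit : {x ∈ A ∪ (D ∪ {d}) | G.Adj d x}
        = {x ∈ A | G.Adj d x} ∪ {x ∈ D | G.Adj d x} := by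
      ext x
      simp only [Set.mem_setOf_eq, Set.mem_union, Set.mem_singleton_iff]
      constructor
      · rintro ⟨(h | h | rfl), ha⟩
        · exact Or.inl ⟨h, ha⟩
        · exact Or.inr ⟨h, ha⟩
        · exact absurd ha (G.irrefl)
      · rintro (⟨h, ha⟩ | ⟨h, ha⟩) <;> exact ⟨by tauto, ha⟩
    have hdisj : Disjoint {x ∈ A | G.Adj d x} {x ∈ D | G.Adj d x} := by
      rw [Set.disjoint_left]
      rintro x ⟨hx, _⟩ ⟨hx', _⟩
      exact hDA x hx' hx
    rw [hsplit, Set.encard_union_eq hdisj, hval] at hdval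
    have hempty : {x ∈ D | G.Adj d x} = ∅ := by
      rw [← Set.encard_eq_zero]
      by_contra h
      have h1 : 1 ≤ {x ∈ D | G.Adj d x}.encard := Set.one_le_encard_iff_nonempty.mpr
        (Set.nonempty_iff_ne_empty.mpr (fun he => h (by rw [he, Set.encard_empty])))
      have : (n : ℕ∞) + 1 ≤ (n : ℕ∞) + {x ∈ D | G.Adj d x}.encard := by
        exact add_le_add le_rfl h1
      have hle : (n : ℕ∞) + 1 ≤ (n : ℕ∞) := le_trans this hdval
      have := ENat.add_one_le_iff (by simp : (n : ℕ∞) ≠ ⊤) |>.mp hle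
      exact absurd this (lt_irrefl _)
    have hnoadj : ∀ x ∈ D, ¬ G.Adj d x := by
      intro x hx hadj
      have : x ∈ ({x ∈ D | G.Adj d x} : Set V) := ⟨hx, hadj⟩
      rw [hempty] at this; exact this
    obtain ⟨e, he, heval⟩ := hA D hDsub hfin hne
    refine ⟨e, he, ?_⟩
    unfold valencyLE at heval ⊢
    have heq : {x ∈ (A ∪ {d}) ∪ D | G.Adj e x} = {x ∈ A ∪ D | G.Adj e x} := by
      ext x
      simp only [Set.mem_setOf_eq, Set.mem_union, Set.mem_singleton_iff]
      constructor
      · rintro ⟨(h | rfl) | h, ha⟩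
        · exact ⟨Or.inl h, ha⟩
        · exact absurd ha.symm (hnoadj e he)
        · exact ⟨Or.inr h, ha⟩
      · rintro ⟨h | h, ha⟩ <;> exact ⟨by tauto, ha⟩
    rwa [heq]
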